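/- Fix real numbers p > 0 and j0 ≥ 0, and let C ∈ ℝ satisfy C² = j0²·p². For n ∈ ℕ set G(n) = sgn(C)·j0·(n+1), F(n) = (j0² + (n+1)² − 1)/2, ε_n = √(p²/(j0² + (n+1)² − 1)), α_j(n) = √((2F(n) + 1 − j² − G(n)²/j²)/((2j+1)(2j−1))), and β_j(n) = G(n)/(j(j+1)). Then for every real j with j > 1/2 and j ≥ j0, and every real m with −j ≤ m ≤ j, the following three limits hold as n → ∞: (i) ε_n·α_j(n)·√((j−m)(j−m−1)) → α̃_j·√((j−m)(j−m−1)); (ii) ε_n·β_j(n)·√((j−m)(j+m+1)) → (C/(j(j+1)))·√((j−m)(j+m+1)); (iii) −ε_n·α_{j+1}(n)·√((j+m+1)(j+m+2)) → −α̃_{j+1}·√((j+m+1)(j+m+2)); where α̃_j = √((p² − C²/j²)/((2j+1)(2j−1))). (These are the limits of the matrix elements of ρ_{F(n),G(n)}(ε_n N₊) in Theorem 1, converging to the matrix elements of η_{p²,C}(P₊).) -/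

import Mathlib

/-- Contraction parameter ε_n = √(p²/(j0² + (n+1)² − 1)). -/
noncomputable def epsSeq (p j0 : ℝ) (n : ℕ) : ℝ :=
  Real.sqrt (p ^ 2 / (j0 ^ 2 + ((n : ℝ) + 1) ^ 2 - 1))

/-- G(n) = sgn(C)·j0·(n+1). -/
noncomputable def Gseq (C j0 : ℝ) (n : ℕ) : ℝ :=
  Real.sign C * j0 * ((n : ℝ) + 1)

/-- F(n) = (j0² + (n+1)² − 1)/2. -/
noncomputable def Fseq (j0 : ℝ) (n : ℕ) : ℝ :=
  (j0 ^ 2 + ((n : ℝ) + 1) ^ 2 - 1) / 2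

/-- α_j(n) = √((2F(n) + 1 − j² − G(n)²/j²)/((2j+1)(2j−1))). -/
noncomputable def alphaSeq (p j0 C j : ℝ) (n : ℕ) : ℝ :=
  Real.sqrt
    ((2 * Fseq j0 n + 1 - j ^ 2 - (Gseq C j0 n) ^ 2 / j ^ 2) /
      ((2 * j + 1) * (2 * j - 1)))

/-- β_j(n) = G(n)/(j(j+1)). -/
noncomputable def betaSeq (C j0 j : ℝ) (n : ℕ) : ℝ :=
  Gseq C j0 n / (j * (j + 1))

/-- α̃_j = √((p² − C²/j²)/((2j+1)(2j−1))). -/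
noncomputable def alphaTilde (p C j : ℝ) : ℝ :=
  Real.sqrt ((p ^ 2 - C ^ 2 / j ^ 2) / ((2 * j + 1) * (2 * j - 1)))

open Filter Topology

private lemma hD_atTop (j0 : ℝ) :
    Tendsto (fun n : ℕ => j0 ^ 2 + ((n : ℝ) + 1) ^ 2 - 1) Filter.atTop Filter.atTop := by
  apply tendsto_atTop_add_const_right
  apply tendsto_atTop_add_const_left
  have h : Tendsto (fun n : ℕ => ((n : ℝ) + 1)) atTop atTop :=
    tendsto_atTop_add_const_right _ 1 tendsto_natCast_atTop_atTop
  exact (tendsto_pow_atTop (two_ne_zero)).comp h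

private lemma hD_nonneg (j0 : ℝ) (n : ℕ) : 0 ≤ j0 ^ 2 + ((n : ℝ) + 1) ^ 2 - 1 := by
  have h0 : (0:ℝ) ≤ (n : ℝ) := Nat.cast_nonneg n
  nlinarith [sq_nonneg j0, sq_nonneg ((n:ℝ))]

private lemma hD_ev_pos (j0 : ℝ) :
    ∀ᶠ n : ℕ in Filter.atTop, 0 < j0 ^ 2 + ((n : ℝ) + 1) ^ 2 - 1 := by
  filter_upwards [Filter.eventually_ge_atTop 1] with n hn
  have h1 : (1:ℝ) ≤ (n : ℝ) := by exact_mod_cast hn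
  nlinarith [sq_nonneg j0]

private lemma hD_inv (j0 : ℝ) :
    Tendsto (fun n : ℕ => (j0 ^ 2 + ((n : ℝ) + 1) ^ 2 - 1)⁻¹) Filter.atTop (nhds 0) :=
  (hD_atTop j0).inv_tendsto_atTop

private lemma hratio (j0 : ℝ) :
    Tendsto (fun n : ℕ => ((n : ℝ) + 1) ^ 2 / (j0 ^ 2 + ((n : ℝ) + 1) ^ 2 - 1))
      Filter.atTop (nhds 1) := by
  have h : Tendsto (fun n : ℕ => 1 + (1 - j0 ^ 2) * (j0 ^ 2 + ((n : ℝ) + 1) ^ 2 - 1)⁻¹)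
      Filter.atTop (nhds 1) := by
    have := ((hD_inv j0).const_mul (1 - j0 ^ 2)).const_add (1:ℝ)
    simpa using this
  apply h.congr'
  filter_upwards [hD_ev_pos j0] with n hn
  field_simp
  ring

private lemma hG_sq (p j0 C : ℝ) (hp : 0 < p) (hC : C ^ 2 = j0 ^ 2 * p ^ 2) (n : ℕ) :
    (Gseq C j0 n) ^ 2 = j0 ^ 2 * ((n : ℝ) + 1) ^ 2 := by
  unfold Gseq
  rcases lt_trichotomy C 0 with h | h | h
  · rw [Real.sign_of_neg h]; ring
  · have hj0 : j0 = 0 := by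
      rw [h] at hC
      have : j0 ^ 2 * p ^ 2 = 0 := by linarith [hC]
      have hp2 : p ^ 2 ≠ 0 := by positivity
      have : j0 ^ 2 = 0 := by
        rcases mul_eq_zero.mp this with h' | h'
        · exact h'
        · exact absurd h' hp2
      exact pow_eq_zero_iff (by norm_num) |>.mp this
    rw [hj0]; ring
  · rw [Real.sign_of_pos h]; ring

private lemma hsgn (p j0 C : ℝ) (hp : 0 < p) (hj0 : 0 ≤ j0)
    (hC : C ^ 2 = j0 ^ 2 * p ^ 2) : Real.sign C * (j0 * p) = C := by
  have habs : j0 * p = |C| := by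
    calc j0 * p = Real.sqrt ((j0 * p) ^ 2) := (Real.sqrt_sq (by positivity)).symm
      _ = Real.sqrt (C ^ 2) := by rw [hC]; congr 1; ring
      _ = |C| := Real.sqrt_sq_eq_abs C
  rw [habs]
  rcases lt_trichotomy C 0 with h | h | h
  · rw [Real.sign_of_neg h, abs_of_neg h]; ring
  · rw [h, abs_zero]; ring
  · rw [Real.sign_of_pos h, abs_of_pos h]; ring

private lemma heps_mul (p j0 : ℝ) (hp : 0 < p) :
    Tendsto (fun n : ℕ => epsSeq p j0 n * ((n : ℝ) + 1)) Filter.atTop (nhds p) := by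
  have heq : ∀ n : ℕ, epsSeq p j0 n * ((n : ℝ) + 1) =
      Real.sqrt (p ^ 2 * (((n : ℝ) + 1) ^ 2 / (j0 ^ 2 + ((n : ℝ) + 1) ^ 2 - 1))) := by
    intro n
    rw [epsSeq, show p ^ 2 * (((n : ℝ) + 1) ^ 2 / (j0 ^ 2 + ((n : ℝ) + 1) ^ 2 - 1)) =
        p ^ 2 / (j0 ^ 2 + ((n : ℝ) + 1) ^ 2 - 1) * ((n : ℝ) + 1) ^ 2 by ring,
      Real.sqrt_mul (div_nonneg (sq_nonneg p) (hD_nonneg j0 n)),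
      Real.sqrt_sq (by positivity)]
  have h : Tendsto (fun n : ℕ => p ^ 2 * (((n : ℝ) + 1) ^ 2 /
      (j0 ^ 2 + ((n : ℝ) + 1) ^ 2 - 1))) Filter.atTop (nhds (p ^ 2)) := by
    simpa using (hratio j0).const_mul (p ^ 2)
  have := h.sqrt
  rw [Real.sqrt_sq hp.le] at this
  exact this.congr fun n => (heq n).symm

private lemma halpha (p j0 C : ℝ) (hp : 0 < p) (hj0 : 0 ≤ j0)
    (hC : C ^ 2 = j0 ^ 2 * p ^ 2) (J : ℝ) (hJ : 1 / 2 < J) :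
    Tendsto (fun n : ℕ => epsSeq p j0 n * alphaSeq p j0 C J n) Filter.atTop
      (nhds (alphaTilde p C J)) := by
  set D : ℕ → ℝ := fun n => j0 ^ 2 + ((n : ℝ) + 1) ^ 2 - 1 with hD
  have hK : (0:ℝ) < (2 * J + 1) * (2 * J - 1) := by nlinarith
  have hJ0 : J ≠ 0 := by positivity
  have hinner : Tendsto (fun n : ℕ => (p ^ 2 / D n) *
      ((2 * Fseq j0 n + 1 - J ^ 2 - (Gseq C j0 n) ^ 2 / J ^ 2) /
        ((2 * J + 1) * (2 * J - 1)))) Filter.atTop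
      (nhds ((p ^ 2 - C ^ 2 / J ^ 2) / ((2 * J + 1) * (2 * J - 1)))) := by
    have h0 : Tendsto (fun n : ℕ => 1 + (1 - J ^ 2) * (D n)⁻¹ -
        (j0 ^ 2 / J ^ 2) * (((n : ℝ) + 1) ^ 2 / D n)) Filter.atTop
        (nhds (1 + (1 - J ^ 2) * 0 - (j0 ^ 2 / J ^ 2) * 1)) :=
      (((hD_inv j0).const_mul (1 - J ^ 2)).const_add (1:ℝ)).sub
        ((hratio j0).const_mul (j0 ^ 2 / J ^ 2))
    have h1 := (h0.const_mul (p ^ 2)).div_const ((2 * J + 1) * (2 * J - 1))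
    have heqv : (p ^ 2 - C ^ 2 / J ^ 2) / ((2 * J + 1) * (2 * J - 1)) =
        p ^ 2 * (1 + (1 - J ^ 2) * 0 - (j0 ^ 2 / J ^ 2) * 1) /
          ((2 * J + 1) * (2 * J - 1)) := by
      rw [hC]; field_simp; ring
    rw [heqv]
    apply h1.congr'
    filter_upwards [hD_ev_pos j0] with n hn
    have hDne : D n ≠ 0 := ne_of_gt hn
    rw [hG_sq p j0 C hp hC, Fseq]
    field_simp
    ring
  have heq : ∀ n : ℕ, epsSeq p j0 n * alphaSeq p j0 C J n =
      Real.sqrt ((p ^ 2 / D n) *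
        ((2 * Fseq j0 n + 1 - J ^ 2 - (Gseq C j0 n) ^ 2 / J ^ 2) /
          ((2 * J + 1) * (2 * J - 1)))) := by
    intro n
    rw [epsSeq, alphaSeq, ← Real.sqrt_mul (div_nonneg (sq_nonneg p) (hD_nonneg j0 n))]
  have := hinner.sqrt
  rw [show Real.sqrt ((p ^ 2 - C ^ 2 / J ^ 2) / ((2 * J + 1) * (2 * J - 1))) =
    alphaTilde p C J from rfl] at this
  exact this.congr fun n => (heq n).symm

/- STATEMENT 3: convergence of the three matrix elements of ρ_{F(n),G(n)}(ε_n N₊)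
   to those of η_{p²,C}(P₊). -/
theorem contraction_Nplus_matrix_elements (p j0 C : ℝ) (hp : 0 < p) (hj0 : 0 ≤ j0)
    (hC : C ^ 2 = j0 ^ 2 * p ^ 2) (j : ℝ) (hj : 1 / 2 < j) (hjj0 : j0 ≤ j)
    (m : ℝ) (hm1 : -j ≤ m) (hm2 : m ≤ j) :
    Filter.Tendsto
        (fun n : ℕ => epsSeq p j0 n * alphaSeq p j0 C j n *
          Real.sqrt ((j - m) * (j - m - 1)))
        Filter.atTop (nhds (alphaTilde p C j * Real.sqrt ((j - m) * (j - m - 1)))) ∧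
    Filter.Tendsto
        (fun n : ℕ => epsSeq p j0 n * betaSeq C j0 j n *
          Real.sqrt ((j - m) * (j + m + 1)))
        Filter.atTop (nhds (C / (j * (j + 1)) * Real.sqrt ((j - m) * (j + m + 1)))) ∧
    Filter.Tendsto
        (fun n : ℕ => -(epsSeq p j0 n * alphaSeq p j0 C (j + 1) n *
          Real.sqrt ((j + m + 1) * (j + m + 2))))
        Filter.atTop
        (nhds (-(alphaTilde p C (j + 1) * Real.sqrt ((j + m + 1) * (j + m + 2))))) := by
  refine ⟨(halpha p j0 C hp hj0 hC j hj).mul_const _, ?_, ?_⟩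
  · have h := ((heps_mul p j0 hp).const_mul
      (Real.sign C * j0 / (j * (j + 1)) * Real.sqrt ((j - m) * (j + m + 1))))
    have hval : Real.sign C * j0 / (j * (j + 1)) * Real.sqrt ((j - m) * (j + m + 1)) * p =
        C / (j * (j + 1)) * Real.sqrt ((j - m) * (j + m + 1)) := by
      linear_combination (Real.sqrt ((j - m) * (j + m + 1)) / (j * (j + 1))) *
        hsgn p j0 C hp hj0 hC
    rw [hval] at h
    apply h.congr
    intro n
    simp only [betaSeq, Gseq]
    ring
  · exact ((halpha p j0 C hp hj0 hC (j + 1) (by linarith)).mul_const _).neg
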